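/- Let X = (J, L) be a random variable with values in ℕ² such that P(|X| > t) ≤ K e^{−ct} for all t > 0 (|·| the ℓ¹ norm), and let X₁, X₂, ... be i.i.d. copies, with partial sums X_{1,k} = X₁ + ... + X_k = (J_{1,k}, L_{1,k}). For s ∈ ℕ let K_s = min{k : L_{1,k} > s}. Then P(L_{1,K_s} = l) ≲ 𝟙_{l > s} e^{−c'(l−s)} for some constant c' > 0: the overshoot of the second coordinate over level s has exponential tail. -/

import Mathlib

open MeasureTheory ProbabilityTheory

/-- Exponential tail of the overshoot of the first passage over level `s` for a
2D renewal process with exponentially tailed increments. -/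
theorem stmt18 {Ω : Type*} [MeasurableSpace Ω] (μ : Measure Ω) [IsProbabilityMeasure μ]
    (X : ℕ → Ω → ℕ × ℕ) (hmeas : ∀ i, Measurable (X i))
    (hident : ∀ i, IdentDistrib (X i) (X 0) μ μ)
    (hindep : iIndepFun X μ)
    (hpos : ∀ i ω, 1 ≤ (X i ω).1 ∧ 1 ≤ (X i ω).2)
    (K c : ℝ) (hK : 0 < K) (hc : 0 < c)
    (htail : ∀ t : ℝ, 0 < t →
      μ {ω | t < ((X 0 ω).1 : ℝ) + ((X 0 ω).2 : ℝ)} ≤ ENNReal.ofReal (K * Real.exp (-c * t))) :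
    ∃ c' > (0 : ℝ), ∃ C > (0 : ℝ), ∀ s l : ℕ,
      μ {ω | (∑ i ∈ Finset.range
          (sInf {k : ℕ | s < ∑ i ∈ Finset.range k, (X i ω).2}), (X i ω).2) = l}
        ≤ ENNReal.ofReal
            (if s < l then C * Real.exp (-c' * ((l : ℝ) - (s : ℝ))) else 0) := by
  classical
  refine ⟨c, hc, K, hK, fun s l => ?_⟩
  set Y : ℕ → Ω → ℕ := fun i ω => (X i ω).2 with hYdef
  have hYmeas : ∀ i, Measurable (Y i) := fun i => (hmeas i).snd
  have hYpos : ∀ i ω, 1 ≤ Y i ω := fun i ω => (hpos i ω).2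
  -- partial sums
  set S : ℕ → Ω → ℕ := fun k ω => ∑ i ∈ Finset.range k, Y i ω with hSdef
  have hSmeas : ∀ k, Measurable (S k) := fun k =>
    Finset.measurable_sum _ fun i _ => hYmeas i
  have hSmono : ∀ ω, StrictMono (fun k => S k ω) := fun ω =>
    strictMono_nat_of_lt_succ fun k => by
      have : S (k + 1) ω = S k ω + Y k ω := Finset.sum_range_succ _ k
      have h1 := hYpos k ω
      omega
  have hSk : ∀ ω k, k ≤ S k ω := fun ω k => by
    calc k = ∑ _i ∈ Finset.range k, 1 := by simp
    _ ≤ S k ω := Finset.sum_le_sum fun i _ => hYpos i ω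
  have hne : ∀ ω, ((s + 1 : ℕ) ∈ {k : ℕ | s < S k ω}) := fun ω =>
    lt_of_lt_of_le (Nat.lt_succ_self s) (hSk ω (s + 1))
  have hInf : ∀ ω, s < S (sInf {k : ℕ | s < S k ω}) ω := fun ω =>
    Nat.sInf_mem ⟨s + 1, hne ω⟩
  by_cases hsl : s < l
  swap
  · have : {ω | S (sInf {k : ℕ | s < S k ω}) ω = l} = ∅ := by
      ext ω; simp only [Set.mem_setOf_eq, Set.mem_empty_iff_false, iff_false]
      intro h
      have := hInf ω
      omega
    rw [show {ω | (∑ i ∈ Finset.range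
          (sInf {k : ℕ | s < ∑ i ∈ Finset.range k, (X i ω).2}), (X i ω).2) = l} =
        {ω | S (sInf {k : ℕ | s < S k ω}) ω = l} from rfl, this]
    simp
  -- main case
  rw [if_pos hsl]
  -- The event is contained in a union
  set A : ℕ → ℕ → Set Ω := fun j m => S j ⁻¹' {m} ∩ Y j ⁻¹' {l - m} with hAdef
  have hsub : {ω | S (sInf {k : ℕ | s < S k ω}) ω = l} ⊆
      ⋃ j ∈ Finset.range (s + 1), ⋃ m ∈ Finset.range (s + 1), A j m := by
    intro ω hω
    simp only [Set.mem_setOf_eq] at hω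
    set T := sInf {k : ℕ | s < S k ω} with hT
    have hT1 : s < S T ω := hInf ω
    have hT0 : T ≠ 0 := by
      intro h
      rw [h] at hT1
      simp [hSdef] at hT1
    obtain ⟨j, hj⟩ : ∃ j, T = j + 1 := ⟨T - 1, by omega⟩
    have hjlt : j ∉ {k : ℕ | s < S k ω} := Nat.notMem_of_lt_sInf (by omega)
    simp only [Set.mem_setOf_eq, not_lt] at hjlt
    have hsum : S (j + 1) ω = S j ω + Y j ω := Finset.sum_range_succ _ j
    have hjm : j ≤ S j ω := hSk ω j
    have hl : S j ω + Y j ω = l := by rw [← hsum, ← hj]; exact hω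
    simp only [Set.mem_iUnion, Finset.mem_range]
    refine ⟨j, by omega, S j ω, by omega, rfl, ?_⟩
    show Y j ω = l - S j ω
    omega
  have hAmeas : ∀ j m, MeasurableSet (A j m) := fun j m =>
    ((hSmeas j) (measurableSet_singleton _)).inter ((hYmeas j) (measurableSet_singleton _))
  -- independence
  have hYindep : iIndepFun Y μ :=
    hindep.comp (fun _ => Prod.snd) (fun _ => measurable_snd)
  have hAeq : ∀ j m, μ (A j m) = μ (S j ⁻¹' {m}) * μ (Y j ⁻¹' {l - m}) := by
    intro j m
    have hind : IndepFun (S j) (Y j) μ := by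
      have := hYindep.indepFun_finsetSum_of_notMem hYmeas
        (Finset.notMem_range_self (n := j))
      have heq : (∑ i ∈ Finset.range j, Y i) = S j := by
        ext ω; simp [hSdef, Finset.sum_apply]
      rwa [heq] at this
    exact hind.measure_inter_preimage_eq_mul _ _ (measurableSet_singleton _)
      (measurableSet_singleton _)
  -- identically distributed
  have hident2 : ∀ j (n : ℕ), μ (Y j ⁻¹' {n}) = μ (Y 0 ⁻¹' {n}) := fun j n =>
    ((hident j).comp measurable_snd).measure_mem_eq (measurableSet_singleton _)
  -- tail bound target set
  set B : Set Ω := {ω | ((l : ℝ) - (s : ℝ)) < ((X 0 ω).1 : ℝ) + ((X 0 ω).2 : ℝ)} with hBdef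
  have hchain : μ {ω | S (sInf {k : ℕ | s < S k ω}) ω = l} ≤ μ B := by
    calc μ {ω | S (sInf {k : ℕ | s < S k ω}) ω = l}
        ≤ μ (⋃ j ∈ Finset.range (s + 1), ⋃ m ∈ Finset.range (s + 1), A j m) :=
          measure_mono hsub
      _ ≤ ∑ j ∈ Finset.range (s + 1), μ (⋃ m ∈ Finset.range (s + 1), A j m) :=
          measure_biUnion_finset_le _ _
      _ ≤ ∑ j ∈ Finset.range (s + 1), ∑ m ∈ Finset.range (s + 1), μ (A j m) :=
          Finset.sum_le_sum fun j _ => measure_biUnion_finset_le _ _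
      _ = ∑ m ∈ Finset.range (s + 1),
            (∑ j ∈ Finset.range (s + 1), μ (S j ⁻¹' {m})) * μ (Y 0 ⁻¹' {l - m}) := by
          rw [Finset.sum_comm]
          refine Finset.sum_congr rfl fun m _ => ?_
          rw [Finset.sum_mul]
          exact Finset.sum_congr rfl fun j _ => by rw [hAeq, hident2]
      _ ≤ ∑ m ∈ Finset.range (s + 1), 1 * μ (Y 0 ⁻¹' {l - m}) := by
          refine Finset.sum_le_sum fun m _ => mul_le_mul_left ?_ _
          have hdisj : (↑(Finset.range (s + 1)) : Set ℕ).PairwiseDisjoint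
              (fun j => S j ⁻¹' {m}) := by
            intro j _ j' _ hjj'
            refine Set.disjoint_left.2 fun ω h1 h2 => ?_
            simp only [Set.mem_preimage, Set.mem_singleton_iff] at h1 h2
            exact hjj' ((hSmono ω).injective (h1.trans h2.symm))
          rw [← measure_biUnion_finset hdisj fun j _ =>
            (hSmeas j) (measurableSet_singleton _)]
          exact (measure_mono (Set.subset_univ _)).trans_eq measure_univ
      _ = μ (⋃ m ∈ Finset.range (s + 1), Y 0 ⁻¹' {l - m}) := by
          simp only [one_mul]
          refine (measure_biUnion_finset ?_ fun m _ =>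
            (hYmeas 0) (measurableSet_singleton _)).symm
          intro m hm m' hm' hmm'
          simp only [Finset.coe_range, Set.mem_Iio] at hm hm'
          refine Set.disjoint_left.2 fun ω h1 h2 => ?_
          simp only [Set.mem_preimage, Set.mem_singleton_iff] at h1 h2
          exact hmm' (by omega)
      _ ≤ μ B := by
          refine measure_mono ?_
          intro ω hω
          simp only [Set.mem_iUnion, Set.mem_preimage, Set.mem_singleton_iff,
            Finset.mem_range] at hω
          obtain ⟨m, hm, hY⟩ := hω
          simp only [hBdef, Set.mem_setOf_eq]
          have h1 : (1 : ℕ) ≤ (X 0 ω).1 := (hpos 0 ω).1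
          have h2 : l - s ≤ Y 0 ω := by omega
          have : ((l : ℝ) - s) ≤ ((l - s : ℕ) : ℝ) := by
            rw [Nat.cast_sub (by omega)]
          have h3 : ((l - s : ℕ) : ℝ) ≤ ((X 0 ω).2 : ℝ) := Nat.cast_le.2 h2
          have h4 : (1 : ℝ) ≤ ((X 0 ω).1 : ℝ) := by exact_mod_cast h1
          linarith
  refine hchain.trans ?_
  have hpos' : (0 : ℝ) < (l : ℝ) - s := by
    have : (s : ℝ) < l := Nat.cast_lt.2 hsl
    linarith
  exact htail _ hpos'
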